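/- Let a : (0,∞) → (0,∞) be continuous, I(u) = ∫_u^∞ dv/(v a(v)) < ∞, and suppose there exist c, μ > 0 with a(u)I(u)^μ ≥ c·a(v)I(v)^μ for all 0 < u < v. With Λ chosen so that 0 < Λ < 1/sup(aI), H(s) = (Λ I(s))^{−1/Λ}, F(s) = s^{−1}H(s)^{Λ+1}, and G(s) = ∫_0^s √(F'(σ))dσ, there exists a constant c' > 0 such that F(s) ≤ c'·G(s)·G'(s) for all s > 0. -/

import Mathlib

open Real Filter MeasureTheory Set intervalIntegral
open Topology

set_option maxHeartbeats 4000000 in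
/-- Under the quasi-monotonicity assumption `a(u) I(u)^μ ≥ c a(v) I(v)^μ`
for `0 < u < v`, with `H(s) = (Λ I(s))^(-1/Λ)`, `F(s) = s⁻¹ H(s)^(Λ+1)` and
`G(s) = ∫_0^s √(F'(σ)) dσ`, there is `c' > 0` with `F(s) ≤ c' G(s) G'(s)`. -/
theorem stmt10 (a I H F G : ℝ → ℝ) (c μ Λ : ℝ)
    (ha_cont : ContinuousOn a (Ioi 0)) (ha_pos : ∀ s > (0 : ℝ), 0 < a s)
    (hint : ∀ u > (0 : ℝ), IntegrableOn (fun v => 1 / (v * a v)) (Ioi u))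
    (hI : ∀ u > (0 : ℝ), I u = ∫ v in Ioi u, 1 / (v * a v))
    (hc : 0 < c) (hμ : 0 < μ)
    (hquasi : ∀ u v : ℝ, 0 < u → u < v → c * (a v * I v ^ μ) ≤ a u * I u ^ μ)
    (hΛ : 0 < Λ) (hΛsup : ∀ s > (0 : ℝ), Λ * (a s * I s) < 1)
    (hH : ∀ s > (0 : ℝ), H s = (Λ * I s) ^ (-(1 / Λ)))
    (hF : ∀ s > (0 : ℝ), F s = s⁻¹ * H s ^ (Λ + 1))
    (hG : ∀ s > (0 : ℝ), G s = ∫ σ in (0 : ℝ)..s, Real.sqrt (deriv F σ)) :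
    ∃ c' > (0 : ℝ), ∀ s > (0 : ℝ), F s ≤ c' * G s * deriv G s := by
  obtain ⟨β, hβdef⟩ : ∃ b : ℝ, b = (Λ + 1) / Λ := ⟨_, rfl⟩
  obtain ⟨γ, hγdef⟩ : ∃ g : ℝ, g = (1 / Λ + μ) / 2 := ⟨_, rfl⟩
  have hβ1 : 1 < β := by
    rw [hβdef, lt_div_iff₀ hΛ]; linarith
  have hβ0 : 0 < β := lt_trans one_pos hβ1
  have hγ0 : 0 < γ := by
    rw [hγdef]; positivity
  have h2γ : 2 * γ = β - 1 + μ := by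
    rw [hγdef, hβdef]; field_simp; ring
  -- continuity of the integrand
  have hfcont : ContinuousOn (fun v => 1 / (v * a v)) (Ioi 0) := by
    apply ContinuousOn.div continuousOn_const (continuousOn_id.mul ha_cont)
    intro v hv
    have := ha_pos v hv
    have : (0:ℝ) < v * a v := by exact mul_pos hv this
    exact ne_of_gt this
  -- basic splitting of the integral
  have hIsub : ∀ u w : ℝ, 0 < u → u ≤ w →
      I u = (∫ v in u..w, 1 / (v * a v)) + I w := by
    intro u w hu huw
    have hw : 0 < w := lt_of_lt_of_le hu huw
    rw [hI u hu, hI w hw, intervalIntegral.integral_of_le huw,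
      ← MeasureTheory.setIntegral_union (Ioc_disjoint_Ioi le_rfl) measurableSet_Ioi
        ((hint u hu).mono_set Ioc_subset_Ioi_self) (hint w hw),
      Ioc_union_Ioi_eq_Ioi huw]
  have hIpos : ∀ s, 0 < s → 0 < I s := by
    intro s hs
    rw [hI s hs]
    rw [setIntegral_pos_iff_support_of_nonneg_ae ?_ (hint s hs)]
    · have hsub : Ioi s ⊆ Function.support fun v => 1 / (v * a v) := by
        intro v hv
        have hv0 : 0 < v := hs.trans hv
        have := ha_pos v hv0
        simp only [Function.mem_support]
        positivity
      rw [Set.inter_eq_self_of_subset_right hsub]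
      simp [Real.volume_Ioi]
    · filter_upwards [ae_restrict_mem measurableSet_Ioi] with v hv
      have hv0 : 0 < v := hs.trans hv
      have := ha_pos v hv0
      positivity
  have hIanti : ∀ u w : ℝ, 0 < u → u ≤ w → I w ≤ I u := by
    intro u w hu huw
    rw [hIsub u w hu huw]
    have h0 : 0 ≤ ∫ v in u..w, 1 / (v * a v) := by
      apply intervalIntegral.integral_nonneg huw
      intro v hv
      have hv0 : 0 < v := lt_of_lt_of_le hu hv.1
      have := ha_pos v hv0
      positivity
    linarith
  have hIderiv : ∀ s, 0 < s → HasDerivAt I (-(1 / (s * a s))) s := by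
    intro s hs
    have hw0 : 0 < s / 2 := by positivity
    have hrep : ∀ x, 0 < x → I x = I (s / 2) - ∫ v in (s/2)..x, 1 / (v * a v) := by
      intro x hx
      rcases le_total x (s / 2) with h | h
      · rw [hIsub x (s/2) hx h, intervalIntegral.integral_symm]; ring
      · rw [hIsub (s/2) x hw0 h]; ring
    have hii : IntervalIntegrable (fun v => 1 / (v * a v)) volume (s/2) s := by
      rw [intervalIntegrable_iff, uIoc_of_le (by linarith)]
      exact (hint (s/2) hw0).mono_set Ioc_subset_Ioi_self
    have hmeas : StronglyMeasurableAtFilter (fun v => 1 / (v * a v)) (𝓝 s) volume :=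
      hfcont.stronglyMeasurableAtFilter isOpen_Ioi s hs
    have hca : ContinuousAt (fun v => 1 / (v * a v)) s :=
      hfcont.continuousAt (Ioi_mem_nhds hs)
    have hd := (intervalIntegral.integral_hasDerivAt_right hii hmeas hca).const_sub (I (s/2))
    have hd2 : HasDerivAt I (-(1 / (s * a s))) s := by
      refine HasDerivAt.congr_of_eventuallyEq ?_
        (eventually_of_mem (Ioi_mem_nhds hs) fun x hx => hrep x hx)
      convert hd using 1
    exact hd2
  have hIcont : ContinuousOn I (Ioi 0) :=
    fun x hx => ((hIderiv x hx).continuousAt).continuousWithinAt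
  -- c ≤ 1
  have hcle : c ≤ 1 := by
    have h10 : (0:ℝ) < 1 := one_pos
    have hX : 0 < a 1 * I 1 ^ μ := by
      have := ha_pos 1 h10
      have := hIpos 1 h10
      positivity
    have hca : ContinuousAt (fun u => a u * I u ^ μ) 1 := by
      apply ContinuousAt.mul (ha_cont.continuousAt (Ioi_mem_nhds h10))
      exact ((hIderiv 1 h10).continuousAt).rpow_const (Or.inl (hIpos 1 h10).ne')
    have htend : Tendsto (fun u => a u * I u ^ μ) (𝓝[<] (1:ℝ)) (𝓝 (a 1 * I 1 ^ μ)) :=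
      (hca.tendsto).mono_left nhdsWithin_le_nhds
    have hev : ∀ᶠ u in 𝓝[<] (1:ℝ), c * (a 1 * I 1 ^ μ) ≤ a u * I u ^ μ := by
      filter_upwards [Ioo_mem_nhdsLT_of_mem (⟨by norm_num, le_rfl⟩ : (1:ℝ) ∈ Ioc (1/2) 1)]
        with u hu
      exact hquasi u 1 (by linarith [hu.1] : (0:ℝ) < u) hu.2
    have := ge_of_tendsto htend hev
    nlinarith
  have hquasi' : ∀ u v : ℝ, 0 < u → u ≤ v → c * (a v * I v ^ μ) ≤ a u * I u ^ μ := by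
    intro u v hu huv
    rcases eq_or_lt_of_le huv with rfl | h
    · have hX : 0 < a u * I u ^ μ := by
        have := ha_pos u hu; have := hIpos u hu; positivity
      nlinarith
    · exact hquasi u v hu h
  -- I blows up at 0
  have hItop : Tendsto I (𝓝[>] (0:ℝ)) atTop := by
    have hI1 : 0 < I 1 := hIpos 1 one_pos
    have hlog : Tendsto (fun t : ℝ => I 1 + Λ * I 1 * (-Real.log t)) (𝓝[>] (0:ℝ)) atTop := by
      apply tendsto_atTop_add_const_left
      apply Tendsto.const_mul_atTop (by positivity : (0:ℝ) < Λ * I 1)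
      exact tendsto_neg_atBot_atTop.comp Real.tendsto_log_nhdsGT_zero
    apply tendsto_atTop_mono' _ _ hlog
    filter_upwards [Ioo_mem_nhdsGT_of_mem (⟨le_rfl, one_pos⟩ : (0:ℝ) ∈ Ico 0 1)] with t ht
    have ht0 : 0 < t := ht.1
    have ht1 : t < 1 := ht.2
    have hii : IntervalIntegrable (fun v => 1 / (v * a v)) volume t 1 := by
      rw [intervalIntegrable_iff, uIoc_of_le ht1.le]
      exact (hint t ht0).mono_set Ioc_subset_Ioi_self
    have hii2 : IntervalIntegrable (fun v => Λ * I 1 * (1 / v)) volume t 1 := by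
      apply ContinuousOn.intervalIntegrable
      apply continuousOn_const.mul
      apply ContinuousOn.div continuousOn_const continuousOn_id
      intro v hv
      rw [uIcc_of_le ht1.le] at hv
      exact ne_of_gt (lt_of_lt_of_le ht0 hv.1)
    have hpt : ∀ x ∈ Icc t 1, Λ * I 1 * (1 / x) ≤ 1 / (x * a x) := by
      intro x hx
      have hx0 : 0 < x := lt_of_lt_of_le ht0 hx.1
      have hax : 0 < a x := ha_pos x hx0
      have hIx : I 1 ≤ I x := hIanti x 1 hx0 hx.2
      have hs : Λ * (a x * I x) < 1 := hΛsup x hx0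
      have hIxpos := hIpos x hx0
      rw [mul_one_div, div_le_div_iff₀ (by positivity : (0:ℝ) < x) (by positivity : (0:ℝ) < x * a x)]
      have h1 : Λ * a x * I 1 ≤ 1 := by nlinarith
      calc Λ * I 1 * (x * a x) = Λ * a x * I 1 * x := by ring
        _ ≤ 1 * x := by nlinarith
    have hmono := intervalIntegral.integral_mono_on ht1.le hii2 hii hpt
    have hval : (∫ v in t..(1:ℝ), Λ * I 1 * (1 / v)) = Λ * I 1 * (-Real.log t) := by
      rw [intervalIntegral.integral_const_mul, integral_one_div]
      · rw [Real.log_div one_ne_zero (ne_of_gt ht0), Real.log_one]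
        ring
      · rw [uIcc_of_le ht1.le]
        intro hmem
        exact absurd hmem.1 (not_le.mpr ht0)
    have := hIsub t 1 ht0 ht1.le
    rw [hval] at hmono
    linarith
  -- F equals the explicit power function on Ioi 0
  have hFP : ∀ x, 0 < x → F x = x⁻¹ * (Λ * I x) ^ (-β) := by
    intro x hx
    have hΛI : (0:ℝ) < Λ * I x := by have := hIpos x hx; positivity
    rw [hF x hx, hH x hx, ← Real.rpow_mul hΛI.le]
    congr 2
    rw [hβdef]
    field_simp
  -- derivative of F
  have hFderiv : ∀ x, 0 < x → HasDerivAt F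
      ((x ^ 2)⁻¹ * (Λ * I x) ^ (-β) * ((Λ + 1) * (Λ * (a x * I x))⁻¹ - 1)) x := by
    intro x hx
    have hax := ha_pos x hx
    have hIx := hIpos x hx
    have hΛI : (0:ℝ) < Λ * I x := by positivity
    have h1 : HasDerivAt (fun y => Λ * I y) (Λ * -(1 / (x * a x))) x :=
      (hIderiv x hx).const_mul Λ
    have h2 : HasDerivAt (fun y => (Λ * I y) ^ (-β))
        (Λ * -(1 / (x * a x)) * (-β) * (Λ * I x) ^ (-β - 1)) x :=
      h1.rpow_const (Or.inl hΛI.ne')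
    have h3 : HasDerivAt (fun y : ℝ => y⁻¹) (-(x ^ 2)⁻¹) x := hasDerivAt_inv hx.ne'
    have h4 : HasDerivAt (fun y => y⁻¹ * (Λ * I y) ^ (-β)) (-(x ^ 2)⁻¹ * (Λ * I x) ^ (-β) + x⁻¹ * (Λ * -(1 / (x * a x)) * -β * (Λ * I x) ^ (-β - 1))) x := h3.mul h2
    refine HasDerivAt.congr_of_eventuallyEq ?_
      (eventually_of_mem (Ioi_mem_nhds hx) fun y hy => hFP y hy)
    refine h4.congr_deriv ?_
    symm
    have hsplit : (Λ * I x) ^ (-β - 1) = (Λ * I x) ^ (-β) * (Λ * I x)⁻¹ := by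
      rw [show -β - 1 = -β + (-1) by ring, Real.rpow_add hΛI, Real.rpow_neg_one]
    rw [hsplit, hβdef]
    field_simp
    ring
  have hDFeq : ∀ x, 0 < x →
      deriv F x = (x ^ 2)⁻¹ * (Λ * I x) ^ (-β) * ((Λ + 1) * (Λ * (a x * I x))⁻¹ - 1) :=
    fun x hx => (hFderiv x hx).deriv
  -- continuity of deriv F on Ioi 0
  have hDcont : ContinuousOn
      (fun x => (x ^ 2)⁻¹ * (Λ * I x) ^ (-β) * ((Λ + 1) * (Λ * (a x * I x))⁻¹ - 1)) (Ioi 0) := by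
    apply ContinuousOn.mul
    · apply ContinuousOn.mul
      · exact ((continuous_pow 2).continuousOn).inv₀ fun x hx => by
          have : (0:ℝ) < x := hx; positivity
      · apply ContinuousOn.rpow_const (continuousOn_const.mul hIcont)
        intro x hx
        have := hIpos x hx
        exact Or.inl (mul_pos hΛ this).ne'
    · apply ContinuousOn.sub _ continuousOn_const
      apply continuousOn_const.mul
      apply ContinuousOn.inv₀ (continuousOn_const.mul (ha_cont.mul hIcont))
      intro x hx
      have := ha_pos x hx; have := hIpos x hx
      exact (mul_pos hΛ (mul_pos (ha_pos x hx) (hIpos x hx))).ne'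
  have hsqDFcont : ContinuousOn (fun x => Real.sqrt (deriv F x)) (Ioi 0) := by
    apply ContinuousOn.congr (Real.continuous_sqrt.comp_continuousOn hDcont)
    intro x hx
    simp only [Function.comp_apply]
    rw [hDFeq x hx]
  -- positivity bounds on deriv F
  have hDlow : ∀ x, 0 < x →
      (x ^ 2)⁻¹ * (Λ * I x) ^ (-β) * (Λ * (a x * I x))⁻¹ * Λ ≤ deriv F x := by
    intro x hx
    have hax := ha_pos x hx
    have hIx := hIpos x hx
    have hinv : 1 ≤ (Λ * (a x * I x))⁻¹ :=
      (one_le_inv₀ (by positivity)).mpr (hΛsup x hx).le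
    rw [hDFeq x hx]
    have hQ : (0:ℝ) < (x ^ 2)⁻¹ * (Λ * I x) ^ (-β) := by
      have : (0:ℝ) < (Λ * I x) ^ (-β) := Real.rpow_pos_of_pos (by positivity) _
      positivity
    have : (Λ * (a x * I x))⁻¹ * Λ ≤ (Λ + 1) * (Λ * (a x * I x))⁻¹ - 1 := by nlinarith
    calc (x ^ 2)⁻¹ * (Λ * I x) ^ (-β) * (Λ * (a x * I x))⁻¹ * Λ
        = ((x ^ 2)⁻¹ * (Λ * I x) ^ (-β)) * ((Λ * (a x * I x))⁻¹ * Λ) := by ring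
      _ ≤ ((x ^ 2)⁻¹ * (Λ * I x) ^ (-β)) * ((Λ + 1) * (Λ * (a x * I x))⁻¹ - 1) :=
        mul_le_mul_of_nonneg_left this hQ.le
  have hDhigh : ∀ x, 0 < x →
      deriv F x ≤ (x ^ 2)⁻¹ * (Λ * I x) ^ (-β) * ((Λ + 1) * (Λ * (a x * I x))⁻¹) := by
    intro x hx
    have hax := ha_pos x hx
    have hIx := hIpos x hx
    rw [hDFeq x hx]
    have hQ : (0:ℝ) < (x ^ 2)⁻¹ * (Λ * I x) ^ (-β) := by
      have : (0:ℝ) < (Λ * I x) ^ (-β) := Real.rpow_pos_of_pos (by positivity) _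
      positivity
    calc (x ^ 2)⁻¹ * (Λ * I x) ^ (-β) * ((Λ + 1) * (Λ * (a x * I x))⁻¹ - 1)
        = ((x ^ 2)⁻¹ * (Λ * I x) ^ (-β)) * ((Λ + 1) * (Λ * (a x * I x))⁻¹ - 1) := by ring
      _ ≤ ((x ^ 2)⁻¹ * (Λ * I x) ^ (-β)) * ((Λ + 1) * (Λ * (a x * I x))⁻¹) :=
        mul_le_mul_of_nonneg_left (by linarith) hQ.le
      _ = (x ^ 2)⁻¹ * (Λ * I x) ^ (-β) * ((Λ + 1) * (Λ * (a x * I x))⁻¹) := by ring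
  -- derivative of the auxiliary power functions of I
  have hK2deriv : ∀ x, 0 < x → HasDerivAt (fun y => I y ^ (-(β / 2)))
      (β / 2 * I x ^ (-(β / 2) - 1) * (x * a x)⁻¹) x := by
    intro x hx
    have h := HasDerivAt.rpow_const (p := -(β / 2)) (hIderiv x hx) (Or.inl (hIpos x hx).ne')
    convert h using 1
    rw [one_div]
    ring
  have hKderiv : ∀ x, 0 < x → HasDerivAt (fun y => I y ^ (-γ))
      (γ * I x ^ (-γ - 1) * (x * a x)⁻¹) x := by
    intro x hx
    have h := HasDerivAt.rpow_const (p := -γ) (hIderiv x hx) (Or.inl (hIpos x hx).ne')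
    convert h using 1
    rw [one_div]
    ring
  have hK'cont : ContinuousOn (fun x => γ * I x ^ (-γ - 1) * (x * a x)⁻¹) (Ioi 0) := by
    apply ContinuousOn.mul
    · apply continuousOn_const.mul
      exact hIcont.rpow_const fun x hx => Or.inl (hIpos x hx).ne'
    · apply ContinuousOn.inv₀ (continuousOn_id.mul ha_cont)
      intro x hx
      have h1 := ha_pos x hx
      have h2 : (0:ℝ) < x := hx
      exact (mul_pos h2 h1).ne'
  -- the upper comparison constant
  set C₅ : ℝ := Real.sqrt (Λ ^ (-β) * (Λ + 1) / (Λ ^ 2 * (β / 2) ^ 2)) with hC₅def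
  have hC₅ : 0 ≤ C₅ := Real.sqrt_nonneg _
  have hT1 : (0:ℝ) < Λ ^ (-β) := Real.rpow_pos_of_pos hΛ _
  -- upper pointwise bound for √(deriv F)
  have hupper : ∀ x, 0 < x →
      Real.sqrt (deriv F x) ≤ C₅ * (β / 2 * I x ^ (-(β / 2) - 1) * (x * a x)⁻¹) := by
    intro x hx
    have hax := ha_pos x hx
    have hIx := hIpos x hx
    have hT2 : (0:ℝ) < I x ^ (-(β / 2) - 1) := Real.rpow_pos_of_pos hIx _
    have hg2 : 0 ≤ β / 2 * I x ^ (-(β / 2) - 1) * (x * a x)⁻¹ := by positivity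
    have key : deriv F x ≤ (C₅ * (β / 2 * I x ^ (-(β / 2) - 1) * (x * a x)⁻¹)) ^ 2 := by
      have hC5sq : C₅ ^ 2 = Λ ^ (-β) * (Λ + 1) / (Λ ^ 2 * (β / 2) ^ 2) :=
        Real.sq_sqrt (by positivity)
      have hmulr : (Λ * I x) ^ (-β) = Λ ^ (-β) * I x ^ (-β) := Real.mul_rpow hΛ.le hIx.le
      have hIsq : I x ^ (-(β / 2) - 1) * I x ^ (-(β / 2) - 1)
          = I x ^ (-β) * (I x)⁻¹ * (I x)⁻¹ := by
        rw [← Real.rpow_add hIx,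
          show -(β / 2) - 1 + (-(β / 2) - 1) = -β + -1 + -1 by ring,
          Real.rpow_add hIx, Real.rpow_add hIx, Real.rpow_neg_one]
      have hIβ : (0:ℝ) < I x ^ (-β) := Real.rpow_pos_of_pos hIx _
      have step1 : deriv F x
          ≤ (x ^ 2)⁻¹ * (Λ * I x) ^ (-β) * ((Λ + 1) * (Λ * (a x * I x))⁻¹) := hDhigh x hx
      have step2 : (x ^ 2)⁻¹ * (Λ * I x) ^ (-β) * ((Λ + 1) * (Λ * (a x * I x))⁻¹)
          ≤ (x ^ 2)⁻¹ * (Λ * I x) ^ (-β) * ((Λ + 1) * (Λ * (a x * I x))⁻¹)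
            * (Λ * (a x * I x))⁻¹ := by
        apply le_mul_of_one_le_right (by positivity)
        exact (one_le_inv₀ (by positivity)).mpr (hΛsup x hx).le
      have step3 : (x ^ 2)⁻¹ * (Λ * I x) ^ (-β) * ((Λ + 1) * (Λ * (a x * I x))⁻¹)
            * (Λ * (a x * I x))⁻¹
          = (C₅ * (β / 2 * I x ^ (-(β / 2) - 1) * (x * a x)⁻¹)) ^ 2 := by
        rw [show (C₅ * (β / 2 * I x ^ (-(β / 2) - 1) * (x * a x)⁻¹)) ^ 2
            = C₅ ^ 2 * ((β / 2) ^ 2 * (I x ^ (-(β / 2) - 1) * I x ^ (-(β / 2) - 1))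
              * ((x * a x)⁻¹ * (x * a x)⁻¹)) from by ring, hC5sq, hIsq, hmulr]
        field_simp
      exact step1.trans (step2.trans_eq step3)
    calc Real.sqrt (deriv F x)
        ≤ Real.sqrt ((C₅ * (β / 2 * I x ^ (-(β / 2) - 1) * (x * a x)⁻¹)) ^ 2) :=
          Real.sqrt_le_sqrt key
      _ = C₅ * (β / 2 * I x ^ (-(β / 2) - 1) * (x * a x)⁻¹) :=
          Real.sqrt_sq (by positivity)
  -- main statement
  refine ⟨γ / Real.sqrt c, by positivity, fun s hs => ?_⟩
  have has := ha_pos s hs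
  have hIs := hIpos s hs
  -- integrability of √(deriv F) on (0, s]
  have hGii : IntervalIntegrable (fun x => Real.sqrt (deriv F x)) volume 0 s := by
    rw [intervalIntegrable_iff, uIoc_of_le hs.le]
    have hK₂cont : ContinuousOn (fun y => if 0 < y then I y ^ (-(β / 2)) else 0) (Icc 0 s) := by
      intro y hy
      rcases eq_or_lt_of_le hy.1 with h0 | h0
      · have hy0 : y = 0 := h0.symm
        subst hy0
        have hsub : Icc (0:ℝ) s ⊆ insert 0 (Ioi 0) := by
          intro z hz
          rcases eq_or_lt_of_le hz.1 with h | h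
          · exact Or.inl h.symm
          · exact Or.inr h
        have h00 : (fun y : ℝ => if 0 < y then I y ^ (-(β / 2)) else 0) 0 = 0 := by norm_num
        unfold ContinuousWithinAt
        rw [h00]
        apply Tendsto.mono_left _ (nhdsWithin_mono 0 hsub)
        rw [nhdsWithin_insert, tendsto_sup]
        constructor
        · simpa [h00] using
            (tendsto_pure_nhds (fun y : ℝ => if 0 < y then I y ^ (-(β / 2)) else 0) 0)
        · have h1 : Tendsto (fun u : ℝ => I u ^ (-(β / 2))) (𝓝[>] 0) (𝓝 0) :=
            (tendsto_rpow_neg_atTop (by positivity : (0:ℝ) < β / 2)).comp hItop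
          apply Tendsto.congr' _ h1
          filter_upwards [self_mem_nhdsWithin] with z hz
          exact (if_pos hz).symm
      · apply ContinuousAt.continuousWithinAt
        have hca : ContinuousAt (fun z => I z ^ (-(β / 2))) y :=
          ((hIderiv y h0).continuousAt).rpow_const (Or.inl (hIpos y h0).ne')
        apply hca.congr
        filter_upwards [Ioi_mem_nhds h0] with z hz
        exact (if_pos hz).symm
    have hK₂d : ∀ x ∈ Ioo 0 s, HasDerivAt (fun y => if 0 < y then I y ^ (-(β / 2)) else 0)
        (β / 2 * I x ^ (-(β / 2) - 1) * (x * a x)⁻¹) x := by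
      intro x hx
      refine (hK2deriv x hx.1).congr_of_eventuallyEq ?_
      filter_upwards [Ioi_mem_nhds hx.1] with z hz
      exact if_pos hz
    have hK₂pos : ∀ x ∈ Ioo 0 s, 0 ≤ β / 2 * I x ^ (-(β / 2) - 1) * (x * a x)⁻¹ := by
      intro x hx
      have h1 := ha_pos x hx.1
      have h2 := hIpos x hx.1
      have h3 : (0:ℝ) < x := hx.1
      have h4 : (0:ℝ) < I x ^ (-(β / 2) - 1) := Real.rpow_pos_of_pos h2 _
      positivity
    have hg2int : IntegrableOn (fun x => β / 2 * I x ^ (-(β / 2) - 1) * (x * a x)⁻¹) (Ioc 0 s) :=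
      integrableOn_deriv_of_nonneg hK₂cont hK₂d hK₂pos
    apply Integrable.mono' (hg2int.const_mul C₅)
    · exact (hsqDFcont.aestronglyMeasurable measurableSet_Ioi).mono_measure
        (Measure.restrict_mono Ioc_subset_Ioi_self le_rfl)
    · filter_upwards [ae_restrict_mem measurableSet_Ioc] with x hx
      rw [Real.norm_eq_abs, abs_of_nonneg (Real.sqrt_nonneg _)]
      exact hupper x hx.1
  -- derivative of G at s
  have hGd : HasDerivAt G (Real.sqrt (deriv F s)) s := by
    have hd := intervalIntegral.integral_hasDerivAt_right hGii
      (hsqDFcont.stronglyMeasurableAtFilter isOpen_Ioi s hs)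
      (hsqDFcont.continuousAt (Ioi_mem_nhds hs))
    refine hd.congr_of_eventuallyEq ?_
    filter_upwards [Ioi_mem_nhds hs] with x hx
    exact hG x hx
  -- the lower comparison constant
  set c₁ : ℝ := Real.sqrt (Λ ^ (-β) * (c * (a s * I s ^ μ)) / γ ^ 2) with hc₁def
  have hc₁ : 0 ≤ c₁ := Real.sqrt_nonneg _
  have hIsμ : (0:ℝ) < I s ^ μ := Real.rpow_pos_of_pos hIs _
  -- pointwise lower bound on (0, s]
  have hlowpt : ∀ x, 0 < x → x ≤ s →
      c₁ * (γ * I x ^ (-γ - 1) * (x * a x)⁻¹) ≤ Real.sqrt (deriv F x) := by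
    intro x hx hxs
    have hax := ha_pos x hx
    have hIx := hIpos x hx
    have hT3 : (0:ℝ) < I x ^ (-γ - 1) := Real.rpow_pos_of_pos hIx _
    have hIβ : (0:ℝ) < I x ^ (-β) := Real.rpow_pos_of_pos hIx _
    have hIxμ : (0:ℝ) < I x ^ μ := Real.rpow_pos_of_pos hIx _
    have hg : 0 ≤ γ * I x ^ (-γ - 1) * (x * a x)⁻¹ := by positivity
    have key : (c₁ * (γ * I x ^ (-γ - 1) * (x * a x)⁻¹)) ^ 2 ≤ deriv F x := by
      have hc₁sq : c₁ ^ 2 = Λ ^ (-β) * (c * (a s * I s ^ μ)) / γ ^ 2 :=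
        Real.sq_sqrt (by positivity)
      have hmulr : (Λ * I x) ^ (-β) = Λ ^ (-β) * I x ^ (-β) := Real.mul_rpow hΛ.le hIx.le
      have hIsq : I x ^ (-γ - 1) * I x ^ (-γ - 1)
          = I x ^ (-β) * (I x)⁻¹ * (I x ^ μ)⁻¹ := by
        rw [← Real.rpow_add hIx,
          show -γ - 1 + (-γ - 1) = -β + -1 + -μ by linarith [h2γ],
          Real.rpow_add hIx, Real.rpow_add hIx, Real.rpow_neg_one, Real.rpow_neg hIx.le,
          Real.rpow_neg hIx.le]
      have hq := hquasi' x s hx hxs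
      have step1 : (c₁ * (γ * I x ^ (-γ - 1) * (x * a x)⁻¹)) ^ 2
          = ((x ^ 2)⁻¹ * (Λ * I x) ^ (-β) * (Λ * (a x * I x))⁻¹ * Λ)
            * (c * (a s * I s ^ μ) * (a x * I x ^ μ)⁻¹) := by
        rw [show (c₁ * (γ * I x ^ (-γ - 1) * (x * a x)⁻¹)) ^ 2
            = c₁ ^ 2 * (γ ^ 2 * (I x ^ (-γ - 1) * I x ^ (-γ - 1))
              * ((x * a x)⁻¹ * (x * a x)⁻¹)) from by ring, hc₁sq, hIsq, hmulr]
        field_simp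
      have step2 : c * (a s * I s ^ μ) * (a x * I x ^ μ)⁻¹ ≤ 1 := by
        rw [← div_eq_mul_inv, div_le_one (by positivity)]
        exact hq
      have step3 : ((x ^ 2)⁻¹ * (Λ * I x) ^ (-β) * (Λ * (a x * I x))⁻¹ * Λ)
            * (c * (a s * I s ^ μ) * (a x * I x ^ μ)⁻¹)
          ≤ (x ^ 2)⁻¹ * (Λ * I x) ^ (-β) * (Λ * (a x * I x))⁻¹ * Λ := by
        have hpos : (0:ℝ) < (x ^ 2)⁻¹ * (Λ * I x) ^ (-β) * (Λ * (a x * I x))⁻¹ * Λ := by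
          have : (0:ℝ) < (Λ * I x) ^ (-β) := Real.rpow_pos_of_pos (by positivity) _
          positivity
        nlinarith [step2, hpos.le, mul_le_of_le_one_right hpos.le step2]
      rw [step1]
      exact step3.trans (hDlow x hx)
    calc c₁ * (γ * I x ^ (-γ - 1) * (x * a x)⁻¹)
        = Real.sqrt ((c₁ * (γ * I x ^ (-γ - 1) * (x * a x)⁻¹)) ^ 2) :=
          (Real.sqrt_sq (by positivity)).symm
      _ ≤ Real.sqrt (deriv F x) := Real.sqrt_le_sqrt key
  -- lower bound for G s
  have hGlow : c₁ * I s ^ (-γ) ≤ G s := by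
    have hmain : ∀ t ∈ Ioo (0:ℝ) s, c₁ * (I s ^ (-γ) - I t ^ (-γ)) ≤ G s := by
      intro t ht
      have hii1 : IntervalIntegrable (fun x => Real.sqrt (deriv F x)) volume 0 t :=
        hGii.mono_set (by
          rw [uIcc_of_le ht.1.le, uIcc_of_le hs.le]
          exact Icc_subset_Icc le_rfl ht.2.le)
      have hii2 : IntervalIntegrable (fun x => Real.sqrt (deriv F x)) volume t s :=
        hGii.mono_set (by
          rw [uIcc_of_le ht.2.le, uIcc_of_le hs.le]
          exact Icc_subset_Icc ht.1.le le_rfl)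
      have hsplit : G s = (∫ x in (0:ℝ)..t, Real.sqrt (deriv F x))
          + ∫ x in t..s, Real.sqrt (deriv F x) := by
        rw [hG s hs, ← intervalIntegral.integral_add_adjacent_intervals hii1 hii2]
      have h1 : 0 ≤ ∫ x in (0:ℝ)..t, Real.sqrt (deriv F x) :=
        intervalIntegral.integral_nonneg ht.1.le fun x _ => Real.sqrt_nonneg _
      have hKsub : Icc t s ⊆ Ioi 0 := fun x hx => lt_of_lt_of_le ht.1 hx.1
      have hKii : IntervalIntegrable (fun x => c₁ * (γ * I x ^ (-γ - 1) * (x * a x)⁻¹))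
          volume t s := by
        apply ContinuousOn.intervalIntegrable
        rw [uIcc_of_le ht.2.le]
        exact (continuousOn_const.mul hK'cont).mono hKsub
      have hmono : (∫ x in t..s, c₁ * (γ * I x ^ (-γ - 1) * (x * a x)⁻¹))
          ≤ ∫ x in t..s, Real.sqrt (deriv F x) := by
        apply intervalIntegral.integral_mono_on ht.2.le hKii hii2
        intro x hx
        exact hlowpt x (lt_of_lt_of_le ht.1 hx.1) hx.2
      have hftc : (∫ x in t..s, γ * I x ^ (-γ - 1) * (x * a x)⁻¹)
          = I s ^ (-γ) - I t ^ (-γ) := by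
        apply intervalIntegral.integral_eq_sub_of_hasDerivAt
        · intro x hx
          rw [uIcc_of_le ht.2.le] at hx
          exact hKderiv x (lt_of_lt_of_le ht.1 hx.1)
        · apply ContinuousOn.intervalIntegrable
          rw [uIcc_of_le ht.2.le]
          exact hK'cont.mono hKsub
      rw [intervalIntegral.integral_const_mul, hftc] at hmono
      rw [hsplit]
      linarith
    have htends : Tendsto (fun t => c₁ * (I s ^ (-γ) - I t ^ (-γ))) (𝓝[>] (0:ℝ))
        (𝓝 (c₁ * (I s ^ (-γ) - 0))) := by
      apply Tendsto.const_mul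
      apply Tendsto.const_sub
      exact (tendsto_rpow_neg_atTop hγ0).comp hItop
    have hev : ∀ᶠ t in 𝓝[>] (0:ℝ), c₁ * (I s ^ (-γ) - I t ^ (-γ)) ≤ G s := by
      filter_upwards [Ioo_mem_nhdsGT_of_mem (⟨le_rfl, hs⟩ : (0:ℝ) ∈ Ico 0 s)] with t ht
      exact hmain t ht
    have hle := le_of_tendsto htends hev
    simpa using hle
  -- final computation
  have hsqc : (0:ℝ) < Real.sqrt c := Real.sqrt_pos.mpr hc
  have hΛIs : (0:ℝ) < Λ * I s := by positivity
  have hΛIβ : (0:ℝ) < (Λ * I s) ^ (-β) := Real.rpow_pos_of_pos hΛIs _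
  have hIsγ : (0:ℝ) < I s ^ (-γ) := Real.rpow_pos_of_pos hIs _
  have hDLpos : (0:ℝ) < (s ^ 2)⁻¹ * (Λ * I s) ^ (-β) * (Λ * (a s * I s))⁻¹ * Λ := by
    positivity
  have hIβ2 : (0:ℝ) < I s ^ (-β) := Real.rpow_pos_of_pos hIs _
  have hkey : c₁ ^ 2 * (I s ^ (-γ)) ^ 2
        * ((s ^ 2)⁻¹ * (Λ * I s) ^ (-β) * (Λ * (a s * I s))⁻¹ * Λ)
      = (Real.sqrt c / γ * (s⁻¹ * (Λ * I s) ^ (-β))) ^ 2 := by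
    have hc₁sq : c₁ ^ 2 = Λ ^ (-β) * (c * (a s * I s ^ μ)) / γ ^ 2 :=
      Real.sq_sqrt (by positivity)
    have hmulr : (Λ * I s) ^ (-β) = Λ ^ (-β) * I s ^ (-β) := Real.mul_rpow hΛ.le hIs.le
    have hIsq2 : (I s ^ (-γ)) ^ 2 = I s ^ (-β) * I s * (I s ^ μ)⁻¹ := by
      rw [show ((I s ^ (-γ)) ^ 2 : ℝ) = I s ^ (-γ) * I s ^ (-γ) from sq (I s ^ (-γ)) ▸ rfl]
      rw [← Real.rpow_add hIs,
        show -γ + -γ = -β + 1 + -μ by linarith [h2γ],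
        Real.rpow_add hIs, Real.rpow_add hIs, Real.rpow_one, Real.rpow_neg hIs.le,
        Real.rpow_neg hIs.le]
    have hsqc2 : Real.sqrt c ^ 2 = c := Real.sq_sqrt hc.le
    rw [hc₁sq, hIsq2, hmulr,
      show (Real.sqrt c / γ * (s⁻¹ * (Λ ^ (-β) * I s ^ (-β)))) ^ 2
        = Real.sqrt c ^ 2 * (γ ^ 2)⁻¹ * ((s⁻¹) ^ 2 * (Λ ^ (-β) * Λ ^ (-β)
          * (I s ^ (-β) * I s ^ (-β)))) from by ring, hsqc2]
    field_simp [hγ0.ne', hΛ.ne', hIs.ne', has.ne', hs.ne', hIsμ.ne', hIβ2.ne', hT1.ne']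

  have hexpand : Real.sqrt (c₁ ^ 2 * (I s ^ (-γ)) ^ 2
        * ((s ^ 2)⁻¹ * (Λ * I s) ^ (-β) * (Λ * (a s * I s))⁻¹ * Λ))
      = c₁ * I s ^ (-γ)
        * Real.sqrt ((s ^ 2)⁻¹ * (Λ * I s) ^ (-β) * (Λ * (a s * I s))⁻¹ * Λ) := by
    rw [Real.sqrt_mul (by positivity) _, Real.sqrt_mul (sq_nonneg c₁),
      Real.sqrt_sq hc₁, Real.sqrt_sq hIsγ.le]
  have hsqrtDL : c₁ * I s ^ (-γ)
        * Real.sqrt ((s ^ 2)⁻¹ * (Λ * I s) ^ (-β) * (Λ * (a s * I s))⁻¹ * Λ)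
      = Real.sqrt c / γ * (s⁻¹ * (Λ * I s) ^ (-β)) := by
    rw [← hexpand, hkey]
    exact Real.sqrt_sq (by positivity)
  have hsqDL_le : Real.sqrt ((s ^ 2)⁻¹ * (Λ * I s) ^ (-β) * (Λ * (a s * I s))⁻¹ * Λ)
      ≤ Real.sqrt (deriv F s) := Real.sqrt_le_sqrt (hDlow s hs)
  have hGpos : 0 ≤ G s := le_trans (by positivity) hGlow
  have hGd' : deriv G s = Real.sqrt (deriv F s) := hGd.deriv
  calc F s = γ / Real.sqrt c * (Real.sqrt c / γ * (s⁻¹ * (Λ * I s) ^ (-β))) := by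
        rw [hFP s hs]
        field_simp
      _ = γ / Real.sqrt c * (c₁ * I s ^ (-γ))
          * Real.sqrt ((s ^ 2)⁻¹ * (Λ * I s) ^ (-β) * (Λ * (a s * I s))⁻¹ * Λ) := by
        rw [← hsqrtDL]
        ring
      _ ≤ γ / Real.sqrt c * G s * Real.sqrt (deriv F s) := by
        apply mul_le_mul (mul_le_mul_of_nonneg_left hGlow (by positivity)) hsqDL_le
          (Real.sqrt_nonneg _) (by positivity)
      _ = γ / Real.sqrt c * G s * deriv G s := by rw [hGd']
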